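/- With P the variance-swap price of Theorem 2.1, the hedge coefficients of Theorem 2.2 evaluate in closed form: (λ(1−θ)/S) ∫_{(0,∞)} ( P(t, σ² + x, V) − P(t, σ², V) ) (e^{ρ(1−θ)x} − 1) ν(dx) = ((1−θ)/S) e^{-r(T−t)} (1−e^{-λ(T−t)}) ∫_{(0,∞)} x (e^{ρ(1−θ)x} − 1) ν(dx), and (λθ/S) ∫_{(0,∞)} ( P(t, σ² + x, V) − P(t, σ², V) ) (e^{ρθx} − 1) νᵇ(dx) = (θ/S) e^{-r(T−t)} (1−e^{-λ(T−t)}) ∫_{(0,∞)} x (e^{ρθx} − 1) νᵇ(dx), provided that x ↦ x(e^{ρ(1−θ)x} − 1) is ν-integrable and x ↦ x(e^{ρθx} − 1) is νᵇ-integrable and S ≠ 0, λ > 0. -/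

import Mathlib

open Real MeasureTheory

/-- Closed-form evaluation of the hedge coefficients A and B of Theorem 2.2
when the variance-swap price is the explicit one of Theorem 2.1
(the computation underlying Corollary 2.3). -/
theorem hedgeCoefficients_closedForm
    (lam r ρ θ κ₁ κ₁b κ₂ κ₂b T K : ℝ) (hlam : 0 < lam)
    (P : ℝ → ℝ → ℝ → ℝ)
    (hP : ∀ t σsq V : ℝ, t ≤ T → P t σsq V = Real.exp (-r * (T - t)) *
      (V + (T - t) * (κ₁ * (1 - θ) + κ₁b * θ)
        + (1 / lam) * (1 - Real.exp (-lam * (T - t))) *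
            (σsq - κ₁ * (1 - θ) - κ₁b * θ)
        + ρ ^ 2 * (1 - θ) ^ 2 * lam * κ₂ + ρ ^ 2 * θ ^ 2 * lam * κ₂b - K))
    (ν νb : Measure ℝ) (S : ℝ) (hS : S ≠ 0)
    (hν : IntegrableOn (fun x => x * (Real.exp (ρ * (1 - θ) * x) - 1)) (Set.Ioi 0) ν)
    (hνb : IntegrableOn (fun x => x * (Real.exp (ρ * θ * x) - 1)) (Set.Ioi 0) νb)
    (t σsq V : ℝ) (htT : t ≤ T) :
    ((lam * (1 - θ) / S) *
        ∫ x in Set.Ioi (0 : ℝ),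
          (P t (σsq + x) V - P t σsq V) * (Real.exp (ρ * (1 - θ) * x) - 1) ∂ν
      = ((1 - θ) / S) * Real.exp (-r * (T - t)) * (1 - Real.exp (-lam * (T - t))) *
          ∫ x in Set.Ioi (0 : ℝ), x * (Real.exp (ρ * (1 - θ) * x) - 1) ∂ν)
    ∧
    ((lam * θ / S) *
        ∫ x in Set.Ioi (0 : ℝ),
          (P t (σsq + x) V - P t σsq V) * (Real.exp (ρ * θ * x) - 1) ∂νb
      = (θ / S) * Real.exp (-r * (T - t)) * (1 - Real.exp (-lam * (T - t))) *
          ∫ x in Set.Ioi (0 : ℝ), x * (Real.exp (ρ * θ * x) - 1) ∂νb) := by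
  set c : ℝ := Real.exp (-r * (T - t)) * ((1 / lam) * (1 - Real.exp (-lam * (T - t)))) with hc
  have hdiff : ∀ x : ℝ, P t (σsq + x) V - P t σsq V = c * x := by
    intro x
    rw [hP t (σsq + x) V htT, hP t σsq V htT, hc]
    ring
  have hlam' : lam ≠ 0 := ne_of_gt hlam
  constructor
  · have h1 : (∫ x in Set.Ioi (0 : ℝ),
        (P t (σsq + x) V - P t σsq V) * (Real.exp (ρ * (1 - θ) * x) - 1) ∂ν)
        = c * ∫ x in Set.Ioi (0 : ℝ), x * (Real.exp (ρ * (1 - θ) * x) - 1) ∂ν := by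
      rw [← integral_const_mul]
      congr 1
      funext x
      rw [hdiff x]; ring
    rw [h1, hc]
    generalize (∫ x in Set.Ioi (0 : ℝ), x * (Real.exp (ρ * (1 - θ) * x) - 1) ∂ν) = I
    field_simp
  · have h1 : (∫ x in Set.Ioi (0 : ℝ),
        (P t (σsq + x) V - P t σsq V) * (Real.exp (ρ * θ * x) - 1) ∂νb)
        = c * ∫ x in Set.Ioi (0 : ℝ), x * (Real.exp (ρ * θ * x) - 1) ∂νb := by
      rw [← integral_const_mul]
      congr 1
      funext x
      rw [hdiff x]; ring
    rw [h1, hc]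
    generalize (∫ x in Set.Ioi (0 : ℝ), x * (Real.exp (ρ * θ * x) - 1) ∂νb) = I
    field_simp
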